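/- For each team t with home venue v, the average over m ∈ {0,…,2n−3} of the traveling distance of team t in the rotated schedules K*_DRR(m) is at most ℓ_A(t) + (Σ_{v' ≠ v} d(v,v'))/(n−1), where ℓ_A(t) is the traveling distance of t in K*_DRR under Assumption A. -/

import Mathlib

/-- Circle-method single round-robin schedule: opponent of team `t` in slot `s`. -/
def Kstar (n t s : ℕ) : ℕ :=
  if t = n - 1 then (if s % 2 = 0 then s / 2 else (s + n - 1) / 2)
  else
    let r := ((((s : ℤ) - (t : ℤ)) % ((n : ℤ) - 1)).toNat)
    if r = t then n - 1 else r

/-- Home/away assignment of the mirrored double round-robin `K*_DRR`: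
`true` iff team `t` plays home in slot `s ∈ {0,…,2n-3}`. -/
def Home (n t s : ℕ) : Bool :=
  if t < n / 2 then decide (2 * t ≤ s ∧ s ≤ n + 2 * t - 2)
  else if t ≤ n - 2 then !(decide (2 * t - n + 2 ≤ s ∧ s ≤ 2 * t))
  else decide (n - 1 ≤ s)

/-- Venue at which team `t` plays in slot `s ∈ {0,…,2n-3}` of `K*_DRR`:
its own venue for a home game, the opponent's venue for an away game. -/
def loc {V : Type*} (n : ℕ) (venue : ℕ → V) (t s : ℕ) : V :=
  if Home n t s = true then venue t else venue (Kstar n t (s % (n - 1)))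

lemma sum_rotate {β : Type*} [AddCommMonoid β] (L m : ℕ) (hL : 0 < L) (F : ℕ → β) :
    ∑ s ∈ Finset.range L, F ((s + m) % L) = ∑ s ∈ Finset.range L, F s := by
  have h : ∑ s ∈ Finset.range L, F s = ∑ s ∈ Finset.range L, F (s % L) :=
    Finset.sum_congr rfl (fun s hs => by rw [Nat.mod_eq_of_lt (Finset.mem_range.mp hs)])
  rw [h]
  refine Finset.sum_nbij' (i := fun s => (s + m) % L) (j := fun s => (s + (L - m % L)) % L) ?_ ?_ ?_ ?_ ?_
  · intro a ha; exact Finset.mem_range.mpr (Nat.mod_lt _ hL)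
  · intro a ha; exact Finset.mem_range.mpr (Nat.mod_lt _ hL)
  · intro a ha
    have ha' := Finset.mem_range.mp ha
    have hm : m % L < L := Nat.mod_lt _ hL
    have hd := Nat.mod_add_div m L
    have he : L * (m / L + 1) = L * (m / L) + L := by ring
    rw [Nat.mod_add_mod]
    have : a + m + (L - m % L) = a + L * (m / L + 1) := by omega
    rw [this, Nat.add_mul_mod_self_left, Nat.mod_eq_of_lt ha']
  · intro a ha
    have ha' := Finset.mem_range.mp ha
    have hm : m % L < L := Nat.mod_lt _ hL
    have hd := Nat.mod_add_div m L
    have he : L * (m / L + 1) = L * (m / L) + L := by ring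
    rw [Nat.mod_add_mod]
    have : a + (L - m % L) + m = a + L * (m / L + 1) := by omega
    rw [this, Nat.add_mul_mod_self_left, Nat.mod_eq_of_lt ha']
  · intro a ha
    rw [Nat.mod_mod_of_dvd _ dvd_rfl]

lemma kstar_eq (n t s : ℕ) (hn : 4 ≤ n) (ht : t < n - 1) :
    Kstar n t s = (if (s + (n-1) - t) % (n-1) = t then n - 1 else (s + (n-1) - t) % (n-1)) := by
  unfold Kstar
  rw [if_neg (by omega : ¬ t = n - 1)]
  have h1 : ((s:ℤ) - (t:ℤ)) % ((n:ℤ) - 1) = (((s + (n-1) - t : ℕ) : ℤ)) % (((n-1 : ℕ)):ℤ) := by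
    have e1 : ((s + (n-1) - t : ℕ) : ℤ) = (s:ℤ) - (t:ℤ) + ((n:ℤ) - 1) := by
      push_cast [Nat.cast_sub (by omega : t ≤ s + (n-1)), Nat.cast_sub (by omega : 1 ≤ n)]
      ring
    have e2 : (((n-1:ℕ)):ℤ) = (n:ℤ) - 1 := by
      push_cast [Nat.cast_sub (by omega : 1 ≤ n)]; ring
    rw [e1, e2]
    simpa using (Int.add_mul_emod_self_left (a := (s:ℤ) - t) (b := (n:ℤ) - 1) (c := 1)).symm
  simp only [h1, ← Int.natCast_mod, Int.toNat_natCast]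

lemma kstar_spec (n t : ℕ) (hn : 4 ≤ n) (hev : Even n) (ht : t < n) :
    Set.InjOn (Kstar n t) (Finset.range (n-1)) ∧
    Finset.image (Kstar n t) (Finset.range (n-1)) = (Finset.range n).erase t := by
  obtain ⟨k, hk⟩ := hev
  have hinj : Set.InjOn (Kstar n t) (Finset.range (n-1)) := by
    intro s1 hs1 s2 hs2 heq
    simp only [Finset.coe_range, Set.mem_Iio] at hs1 hs2
    by_cases htn : t = n - 1
    · subst htn
      unfold Kstar at heq
      rw [if_pos rfl, if_pos rfl] at heq
      split_ifs at heq <;> omega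
    · have ht' : t < n - 1 := by omega
      rw [kstar_eq n t s1 hn ht', kstar_eq n t s2 hn ht'] at heq
      have key : (s1 + (n-1) - t) % (n-1) = (s2 + (n-1) - t) % (n-1) := by
        have m1 : (s1 + (n-1) - t) % (n-1) < n - 1 := Nat.mod_lt _ (by omega)
        have m2 : (s2 + (n-1) - t) % (n-1) < n - 1 := Nat.mod_lt _ (by omega)
        split_ifs at heq <;> omega
      rcases le_total s1 s2 with hle | hle
      · have hmeq : (s1 + (n-1) - t) ≡ (s2 + (n-1) - t) [MOD n-1] := key
        have hd := (Nat.modEq_iff_dvd' (by omega)).mp hmeq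
        have he : s2 + (n-1) - t - (s1 + (n-1) - t) = s2 - s1 := by omega
        rw [he] at hd
        have := Nat.eq_zero_of_dvd_of_lt hd (by omega)
        omega
      · have hmeq : (s2 + (n-1) - t) ≡ (s1 + (n-1) - t) [MOD n-1] := key.symm
        have hd := (Nat.modEq_iff_dvd' (by omega)).mp hmeq
        have he : s1 + (n-1) - t - (s2 + (n-1) - t) = s1 - s2 := by omega
        rw [he] at hd
        have := Nat.eq_zero_of_dvd_of_lt hd (by omega)
        omega
  refine ⟨hinj, ?_⟩
  have hsub : Finset.image (Kstar n t) (Finset.range (n-1)) ⊆ (Finset.range n).erase t := by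
    intro u hu
    obtain ⟨s, hs, rfl⟩ := Finset.mem_image.mp hu
    have hs' : s < n - 1 := Finset.mem_range.mp hs
    rw [Finset.mem_erase, Finset.mem_range]
    by_cases htn : t = n - 1
    · subst htn
      unfold Kstar
      rw [if_pos rfl]
      split_ifs <;> omega
    · have ht' : t < n - 1 := by omega
      rw [kstar_eq n t s hn ht']
      have m1 : (s + (n-1) - t) % (n-1) < n - 1 := Nat.mod_lt _ (by omega)
      split_ifs <;> omega
  refine Finset.eq_of_subset_of_card_le hsub ?_
  rw [Finset.card_erase_of_mem (Finset.mem_range.mpr ht), Finset.card_range,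
    Finset.card_image_of_injOn hinj, Finset.card_range]

lemma home_pair (n t s : ℕ) (hn : 4 ≤ n) (hev : Even n) (ht : t < n) (hs : s < n-1) :
    (Home n t s = true ∧ Home n t (s+(n-1)) = false) ∨
    (Home n t s = false ∧ Home n t (s+(n-1)) = true) := by
  obtain ⟨k, hk⟩ := hev
  unfold Home
  split_ifs <;>
    simp only [Bool.not_eq_true', Bool.not_eq_false', decide_eq_true_eq,
      decide_eq_false_iff_not, not_and, not_le] <;> omega

theorem stmt_14 {V : Type*} [Fintype V] [DecidableEq V] (n : ℕ) (hn : 4 ≤ n) (hev : Even n)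
    (hcard : Fintype.card V = n)
    (d : V → V → ℝ)
    (hdiag : ∀ v, d v v = 0)
    (hsymm : ∀ u v, d u v = d v u)
    (hnonneg : ∀ u v, 0 ≤ d u v)
    (htri : ∀ u v w, d u w ≤ d u v + d v w)
    (venue : ℕ → V) (hbij : Set.BijOn venue (Set.Iio n) Set.univ)
    (t : ℕ) (ht : t < n) :
    (∑ m ∈ Finset.range (2 * n - 2),
        (d (venue t) (loc n venue t (m % (2 * n - 2)))
          + (∑ s ∈ Finset.range (2 * n - 3),
              d (loc n venue t ((s + m) % (2 * n - 2)))
                (loc n venue t ((s + 1 + m) % (2 * n - 2))))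
          + d (loc n venue t ((2 * n - 3 + m) % (2 * n - 2))) (venue t)))
      / ((2 : ℝ) * n - 2)
    ≤ (∑ s ∈ Finset.range (2 * n - 2),
        d (loc n venue t s) (loc n venue t ((s + 1) % (2 * n - 2))))
      + (∑ x ∈ Finset.univ.erase (venue t), d (venue t) x) / ((n : ℝ) - 1) := by
  set v := venue t with hv
  set c : ℕ → V := loc n venue t with hc
  set L := 2 * n - 2 with hLdef
  have hLpos : 0 < L := by omega
  obtain ⟨hinj, himg⟩ := kstar_spec n t hn hev ht
  have hvinj : Set.InjOn venue (Set.Iio n) := hbij.injOn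
  -- key : total home-venue distance over all slots
  have key : ∑ s ∈ Finset.range L, d v (c s) = ∑ x ∈ Finset.univ.erase v, d v x := by
    have h2 : L = (n-1) + (n-1) := by omega
    rw [h2, Finset.sum_range_add, ← Finset.sum_add_distrib]
    have step : ∀ s ∈ Finset.range (n-1),
        d v (c s) + d v (c ((n-1) + s)) = d v (venue (Kstar n t s)) := by
      intro s hs
      have hs' : s < n - 1 := Finset.mem_range.mp hs
      have hmod1 : s % (n-1) = s := Nat.mod_eq_of_lt hs'
      have hcomm : (n-1) + s = s + (n-1) := by omega
      have hmod2 : (s + (n-1)) % (n-1) = s := by rw [Nat.add_mod_right, hmod1]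
      rcases home_pair n t s hn hev ht hs' with ⟨h1, h2⟩ | ⟨h1, h2⟩
      · have e1 : c s = v := by simp [hc, loc, h1, hv]
        have e2 : c ((n-1) + s) = venue (Kstar n t s) := by
          rw [hcomm]; simp [hc, loc, h2, hmod2]
        rw [e1, e2, hdiag]; ring
      · have e1 : c s = venue (Kstar n t s) := by simp [hc, loc, h1, hmod1]
        have e2 : c ((n-1) + s) = v := by rw [hcomm]; simp [hc, loc, h2, hv]
        rw [e1, e2, hdiag]; ring
    rw [Finset.sum_congr rfl step]
    have himage : ∑ s ∈ Finset.range (n-1), d v (venue (Kstar n t s))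
        = ∑ u ∈ (Finset.range n).erase t, d v (venue u) := by
      rw [← himg]
      have hinj' : ∀ x ∈ Finset.range (n-1), ∀ y ∈ Finset.range (n-1),
          Kstar n t x = Kstar n t y → x = y :=
        fun x hx y hy h => hinj (Finset.mem_coe.mpr hx) (Finset.mem_coe.mpr hy) h
      exact (Finset.sum_image (f := fun u => d v (venue u)) hinj').symm
    rw [himage]
    refine Finset.sum_bij (fun u _ => venue u) ?_ ?_ ?_ ?_
    · intro u hu
      rw [Finset.mem_erase] at hu ⊢
      refine ⟨fun h => hu.1 (hvinj (by simpa using Finset.mem_range.mp hu.2) ht h), Finset.mem_univ _⟩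
    · intro u1 hu1 u2 hu2 h
      exact hvinj (by simpa using Finset.mem_range.mp (Finset.mem_erase.mp hu1).2)
        (by simpa using Finset.mem_range.mp (Finset.mem_erase.mp hu2).2) h
    · intro x hx
      rw [Finset.mem_erase] at hx
      obtain ⟨u, hu, hux⟩ := hbij.surjOn (Set.mem_univ x)
      refine ⟨u, Finset.mem_erase.mpr ⟨fun h => hx.1 (by rw [← hux, h]), Finset.mem_range.mpr hu⟩, hux⟩
    · intro u hu; rfl
  -- edge rotation
  have edge : ∀ m, ∑ s ∈ Finset.range (2*n-3), d (c ((s+m)%L)) (c ((s+1+m)%L))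
      = (∑ s ∈ Finset.range L, d (c s) (c ((s+1)%L))) - d (c ((2*n-3+m)%L)) (c (m%L)) := by
    intro m
    have hfull : ∑ s ∈ Finset.range L, d (c ((s+m)%L)) (c ((s+1+m)%L))
        = ∑ s ∈ Finset.range L, d (c s) (c ((s+1)%L)) := by
      have hrot := sum_rotate L m hLpos (fun x => d (c x) (c ((x+1)%L)))
      rw [← hrot]
      refine Finset.sum_congr rfl fun s hs => ?_
      have h9 : ((s+m)%L + 1)%L = (s+1+m)%L := by rw [Nat.mod_add_mod, Nat.add_right_comm]
      rw [h9]
    have hsplit : L = (2*n-3) + 1 := by omega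
    rw [hsplit, Finset.sum_range_succ] at hfull
    rw [← hsplit] at hfull
    rw [Nat.add_mod_left] at hfull
    linarith [hfull]
  set ℓ := ∑ s ∈ Finset.range L, d (c s) (c ((s+1)%L)) with hℓ
  set S := ∑ x ∈ Finset.univ.erase v, d v x with hS
  -- per-rotation bound
  have bound : ∀ m ∈ Finset.range L,
      d v (c (m % L)) + (∑ s ∈ Finset.range (2*n-3), d (c ((s+m)%L)) (c ((s+1+m)%L)))
        + d (c ((2*n-3+m)%L)) v
      ≤ ℓ + (d v (c (m % L)) + d (c ((2*n-3+m)%L)) v) := by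
    intro m _
    rw [edge m]
    have := hnonneg (c ((2*n-3+m)%L)) (c (m%L))
    linarith
  have total : ∑ m ∈ Finset.range L,
      (d v (c (m % L)) + (∑ s ∈ Finset.range (2*n-3), d (c ((s+m)%L)) (c ((s+1+m)%L)))
        + d (c ((2*n-3+m)%L)) v)
      ≤ (L : ℝ) * ℓ + 2 * S := by
    calc _ ≤ ∑ m ∈ Finset.range L, (ℓ + (d v (c (m % L)) + d (c ((2*n-3+m)%L)) v)) :=
          Finset.sum_le_sum bound
      _ = (L : ℝ) * ℓ + ((∑ m ∈ Finset.range L, d v (c (m % L)))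
            + ∑ m ∈ Finset.range L, d (c ((2*n-3+m)%L)) v) := by
          rw [Finset.sum_add_distrib, Finset.sum_add_distrib, Finset.sum_const,
            Finset.card_range, nsmul_eq_mul]
      _ = (L : ℝ) * ℓ + 2 * S := by
          have e1 : ∑ m ∈ Finset.range L, d v (c (m % L)) = S := by
            rw [← key]
            exact Finset.sum_congr rfl fun m hm => by
              rw [Nat.mod_eq_of_lt (Finset.mem_range.mp hm)]
          have e2 : ∑ m ∈ Finset.range L, d (c ((2*n-3+m)%L)) v = S := by
            have estep : ∑ m ∈ Finset.range L, d (c ((2*n-3+m)%L)) v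
                = ∑ m ∈ Finset.range L, d (c ((m+(2*n-3))%L)) v := by
              exact Finset.sum_congr rfl fun m hm => by rw [Nat.add_comm]
            rw [estep, sum_rotate L (2*n-3) hLpos (fun x => d (c x) v), ← key]
            exact Finset.sum_congr rfl fun m hm => hsymm _ _
          rw [e1, e2]; ring
  -- divide
  have hn4 : (4:ℝ) ≤ (n:ℝ) := by exact_mod_cast hn
  have hpos : (0:ℝ) < 2 * (n:ℝ) - 2 := by linarith
  rw [div_le_iff₀ hpos]
  have hcast : ((L : ℕ) : ℝ) = 2 * (n:ℝ) - 2 := by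
    rw [hLdef]
    push_cast [Nat.cast_sub (by omega : 2 ≤ 2*n)]
    ring
  have hne : (n:ℝ) - 1 ≠ 0 := by linarith
  have expand : (ℓ + S / ((n:ℝ) - 1)) * (2 * (n:ℝ) - 2) = (2 * (n:ℝ) - 2) * ℓ + 2 * S := by
    field_simp
  rw [expand]
  rw [hcast] at total
  exact le_trans total (by linarith)
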